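/- Let ℓ be a prime, m ∈ ℕ ∪ {∞}, (K,v) a valued field, and w a valuation of the residue field Kv. Let ρ : D_v^m → 𝔤^m(Kv), σ ↦ σ_v, denote the canonical map (which is surjective with kernel I_v^m). Then I_v^m ⊆ I_{w∘v}^m and I_v^m ⊆ D_{w∘v}^m ⊆ D_v^m, and one has ρ(D_{w∘v}^m) = D_w^m, ρ(I_{w∘v}^m) = I_w^m, D_{w∘v}^m = ρ^{−1}(D_w^m) and I_{w∘v}^m = ρ^{−1}(I_w^m); i.e., under the identification D_v^m/I_v^m ≅ 𝔤^m(Kv), one has D_w^m = D_{w∘v}^m/I_v^m and I_w^m = I_{w∘v}^m/I_v^m. -/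

import Mathlib

open Polynomial

noncomputable section

/-- The coefficient ring `Λ_m`: `ℤ/ℓ^m` for finite `m`, and `ℤ_ℓ` for `m = ∞`. -/
def Lam (ℓ : ℕ) [Fact ℓ.Prime] : ℕ∞ → Type
  | ⊤ => PadicInt ℓ
  | (m : ℕ) => ZMod (ℓ ^ m)

instance (ℓ : ℕ) [Fact ℓ.Prime] : (m : ℕ∞) → CommRing (Lam ℓ m)
  | ⊤ => inferInstanceAs (CommRing (PadicInt ℓ))
  | (m : ℕ) => inferInstanceAs (CommRing (ZMod (ℓ ^ m)))

/-- The canonical projection `Λ_m → Λ_n` (for `n ≤ m`; junk value `0` otherwise). -/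
def LamProj (ℓ : ℕ) [Fact ℓ.Prime] : (m n : ℕ∞) → Lam ℓ m →+ Lam ℓ n
  | ⊤, ⊤ => AddMonoidHom.id _
  | ⊤, (n : ℕ) => (PadicInt.toZModPow n).toAddMonoidHom
  | (m : ℕ), (n : ℕ) =>
      if h : ℓ ^ n ∣ ℓ ^ m then (ZMod.castHom h (ZMod (ℓ ^ n))).toAddMonoidHom else 0
  | (_ : ℕ), ⊤ => 0

/-- The `ℓ^m`-minimized Galois group `𝔤^m(K) = Hom(Kˣ, Λ_m)`. -/
abbrev gal (ℓ : ℕ) [Fact ℓ.Prime] (m : ℕ∞) (K : Type*) [Field K] : Type _ :=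
  Additive Kˣ →+ Lam ℓ m

variable {ℓ : ℕ} [Fact ℓ.Prime] {K : Type*} [Field K]

open scoped Classical

/-- Evaluation of `σ ∈ 𝔤^m(K)` at a unit of `K`. -/
def galu {m : ℕ∞} (σ : gal ℓ m K) (x : Kˣ) : Lam ℓ m :=
  σ (Additive.ofMul x)

/-- Evaluation of `σ ∈ 𝔤^m(K)` at an arbitrary element of `K` (junk value `0` at `0`). -/
def galApp {m : ℕ∞} (σ : gal ℓ m K) (x : K) : Lam ℓ m :=
  if hx : x ≠ 0 then galu σ (Units.mk0 x hx) else 0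

/-- Scalar multiplication of `𝔤^m(K)` by `Λ_m`. -/
def galSmul {m : ℕ∞} (a : Lam ℓ m) (σ : gal ℓ m K) : gal ℓ m K :=
  AddMonoidHom.mk' (fun x => a * σ x) (by intro x y; simp only [map_add, mul_add])

/-- The canonical map `𝔤^m(K) → 𝔤^n(K)`, `σ ↦ σ_n`. -/
def galProj (m n : ℕ∞) (σ : gal ℓ m K) : gal ℓ n K :=
  (LamProj ℓ m n).comp σ

/-- `(σ,τ)` is a C-pair: `σ(x)·τ(1−x) = σ(1−x)·τ(x)` for all `x ∈ K ∖ {0,1}`. -/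
def IsCPair {m : ℕ∞} (σ τ : gal ℓ m K) : Prop :=
  ∀ x : K, x ≠ 0 → x ≠ 1 →
    galApp σ x * galApp τ (1 - x) = galApp σ (1 - x) * galApp τ x

/-- A subset of `𝔤^m(K)` is a C-set if all pairs of its elements are C-pairs. -/
def IsCSet {m : ℕ∞} (S : Set (gal ℓ m K)) : Prop :=
  ∀ σ ∈ S, ∀ τ ∈ S, IsCPair σ τ

/-- `μ_{c·ℓ^m} ⊂ K`: the polynomial `X^{c·ℓ^m} − 1` splits completely in `K`
(for all finite exponents when `m = ∞`). -/
def MuIn (K : Type*) [Field K] (c ℓ : ℕ) : ℕ∞ → Prop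
  | ⊤ => ∀ k : ℕ, Polynomial.Splits ((Polynomial.X : K[X]) ^ (c * ℓ ^ k) - 1)
  | (N : ℕ) => Polynomial.Splits ((Polynomial.X : K[X]) ^ (c * ℓ ^ N) - 1)

/-- `M_r(n) = (r+1)·n − r`. -/
def Mfun (r : ℕ) : ℕ∞ → ℕ∞
  | ⊤ => ⊤
  | (n : ℕ) => (((r + 1) * n - r : ℕ) : ℕ∞)

/-- `N(n) = M_1((6·ℓ^{3n−2} − 7)·(n−1) + 3n − 2)`. -/
def Nfun (ℓ : ℕ) : ℕ∞ → ℕ∞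
  | ⊤ => ⊤
  | (n : ℕ) => Mfun 1 (((6 * ℓ ^ (3 * n - 2) - 7) * (n - 1) + 3 * n - 2 : ℕ) : ℕ∞)

/-- `R(n) = N(M_2(M_1(n)))`. -/
def Rfun (ℓ : ℕ) (n : ℕ∞) : ℕ∞ :=
  Nfun ℓ (Mfun 2 (Mfun 1 n))

/-- The minimized inertia group `I_v^m` of a valuation (valuation subring) of `K`:
homomorphisms vanishing on the `v`-units. -/
def inertia (ℓ : ℕ) [Fact ℓ.Prime] (m : ℕ∞) (A : ValuationSubring K) : Set (gal ℓ m K) :=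
  {σ | ∀ x : Kˣ, A.valuation (x : K) = 1 → galu σ x = 0}

/-- The minimized decomposition group `D_v^m` of a valuation (valuation subring) of `K`:
homomorphisms vanishing on the principal `v`-units `1 + 𝔪_v`. -/
def decomp (ℓ : ℕ) [Fact ℓ.Prime] (m : ℕ∞) (A : ValuationSubring K) : Set (gal ℓ m K) :=
  {σ | ∀ x : Kˣ, A.valuation ((x : K) - 1) < 1 → galu σ x = 0}

/-- A subgroup of (the units of) a linearly ordered group-with-zero is convex. -/
def IsConvexSub {Γ : Type*} [LinearOrderedCommGroupWithZero Γ] (C : Subgroup Γˣ) : Prop :=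
  ∀ γ c : Γˣ, (1 : Γ) ≤ (γ : Γ) → (γ : Γ) ≤ (c : Γ) → c ∈ C → γ ∈ C

/-- A subgroup is `ℓ`-divisible. -/
def IsLDivisible {Γ : Type*} [LinearOrderedCommGroupWithZero Γ] (ℓ : ℕ) (C : Subgroup Γˣ) :
    Prop :=
  ∀ c ∈ C, ∃ d ∈ C, d ^ ℓ = c

/-- Condition (V1): the value group `vK` contains no nontrivial `ℓ`-divisible convex
subgroups. -/
def NoLDivConvex (ℓ : ℕ) (A : ValuationSubring K) : Prop :=
  ∀ C : Subgroup (A.ValueGroup)ˣ, IsConvexSub C → IsLDivisible ℓ C → C = ⊥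

/-- The residue field `Kv` of a valuation. -/
abbrev resField (A : ValuationSubring K) : Type _ := IsLocalRing.ResidueField A

/-- `τ ∈ 𝔤^m(Kv)` is the element induced by `σ ∈ D_v^m` (i.e. `τ = σ_v`): for every
`v`-unit `x` one has `τ(x̄) = σ(x)`. -/
def Induces {m : ℕ∞} (A : ValuationSubring K) (σ : gal ℓ m K)
    (τ : gal ℓ m (resField A)) : Prop :=
  ∀ (x : Kˣ) (h : A.valuation (x : K) = 1),
    galApp τ (IsLocalRing.residue A ⟨(x : K), (A.valuation_le_one_iff (x : K)).mp h.le⟩) =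
      galu σ x

/-- An `m`-visible valuation. -/
def IsVisibleVal (ℓ : ℕ) [Fact ℓ.Prime] (m : ℕ∞) (A : ValuationSubring K) : Prop :=
  NoLDivConvex ℓ A ∧
  ¬ IsCSet (Set.univ : Set (gal ℓ m (resField A))) ∧
  ∀ B : ValuationSubring (resField A),
    decomp ℓ m B = Set.univ → inertia ℓ m B = {0}

/-- `Σ^⊥ = ∩_{σ ∈ Σ} ker σ ⊆ Kˣ`. -/
def orth {m : ℕ∞} (S : Set (gal ℓ m K)) : Set Kˣ :=
  {x | ∀ σ ∈ S, galu σ x = 0}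

/-- `σ` is valuative: `σ ∈ I_v^m` for some valuation `v` of `K`. -/
def IsValuative {m : ℕ∞} (σ : gal ℓ m K) : Prop :=
  ∃ A : ValuationSubring K, σ ∈ inertia ℓ m A

/-- `V = v_σ` is the coarsest valuation with `σ ∈ I_V^m`. -/
def IsVsigma {m : ℕ∞} (σ : gal ℓ m K) (V : ValuationSubring K) : Prop :=
  σ ∈ inertia ℓ m V ∧ ∀ W : ValuationSubring K, σ ∈ inertia ℓ m W → W ≤ V

/-- `V = v_Σ` is the coarsest valuation with `Σ ⊆ I_V^m`. -/
def IsVSet {m : ℕ∞} (S : Set (gal ℓ m K)) (V : ValuationSubring K) : Prop :=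
  S ⊆ inertia ℓ m V ∧ ∀ W : ValuationSubring K, S ⊆ inertia ℓ m W → W ≤ V

/-- The set `D^m_n(Σ)`. -/
def Dmn (n m : ℕ∞) (S : Set (gal ℓ n K)) : Set (gal ℓ n K) :=
  {τ | ∀ σ ∈ S, ∃ τ₁ τ₂ : gal ℓ n K, ∃ σ' τ' τ₁' τ₂' : gal ℓ m K,
    galProj m n σ' = σ ∧ galProj m n τ' = τ ∧ galProj m n τ₁' = τ₁ ∧ galProj m n τ₂' = τ₂ ∧
    ¬ IsCPair τ₁ τ₂ ∧ IsCPair σ' τ' ∧ IsCPair σ' τ₁' ∧ IsCPair σ' τ₂'}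

/-- The set `I^m_n(Σ)`. -/
def Imn (n m : ℕ∞) (S : Set (gal ℓ n K)) : Set (gal ℓ n K) :=
  {σ | σ ∈ S ∧ ∃ σ' : gal ℓ m K, galProj m n σ' = σ ∧
    ∀ τ ∈ S, ∃ τ' : gal ℓ m K, galProj m n τ' = τ ∧ IsCPair σ' τ'}

/-- `K` is a function field over `k`, i.e. a finitely generated field extension. -/
def IsFunctionField (k K : Type*) [Field k] [Field K] [Algebra k K] : Prop :=
  ∃ s : Finset K, IntermediateField.adjoin k (s : Set K) = ⊤

/-- `trdeg(K|k) = d`. -/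
def HasTrdeg (k K : Type*) [Field k] [Field K] [Algebra k K] (d : ℕ) : Prop :=
  ∃ b : Fin d → K, IsTranscendenceBasis k b


/-- The set `ℓ^n·𝔤^m(K)` (interpreted as the trivial subgroup when `n = ∞`). -/
def lPowSet (ℓ : ℕ) [Fact ℓ.Prime] (m : ℕ∞) (K : Type*) [Field K] : ℕ∞ → Set (gal ℓ m K)
  | ⊤ => {0}
  | (k : ℕ) => {x | ∃ σ : gal ℓ m K, x = galSmul ((ℓ : Lam ℓ m) ^ k) σ}

end


-- ===================== Auxiliary development =====================

section AuxExtension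

/-- Finite-step extension: extend a hom from a saturated subgroup to a bigger subgroup
with finitely generated torsion-free quotient. -/
theorem extend_fg {G M : Type*} [AddCommGroup G] [AddCommGroup M]
    (H H' : AddSubgroup G) (hle : H ≤ H')
    (hfin : Module.Finite ℤ (H' ⧸ (H.addSubgroupOf H').toIntSubmodule))
    (hsat : ∀ (n : ℕ), 0 < n → ∀ g : G, n • g ∈ H → g ∈ H)
    (f : H →+ M) :
    ∃ F : H' →+ M, ∀ (g : G) (hg : g ∈ H) (hg' : g ∈ H'), F ⟨g, hg'⟩ = f ⟨g, hg⟩ := by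
  set S : Submodule ℤ H' := (H.addSubgroupOf H').toIntSubmodule with hS
  have memS : ∀ x : H', x ∈ S ↔ (x : G) ∈ H := fun x => Iff.rfl
  have hsatz : ∀ (c : ℤ), c ≠ 0 → ∀ g : G, c • g ∈ H → g ∈ H := by
    intro c hc g hg
    have hn : 0 < c.natAbs := Int.natAbs_pos.mpr hc
    rcases c.natAbs_eq with he | he
    · rw [he, natCast_zsmul] at hg; exact hsat _ hn _ hg
    · rw [he, neg_zsmul, natCast_zsmul] at hg
      have := hsat _ hn (-g) (by rwa [smul_neg])
      simpa using H.neg_mem this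
  haveI : NoZeroSMulDivisors ℤ (H' ⧸ S) := by
    constructor
    rintro c q h
    by_cases hc : c = 0
    · exact Or.inl hc
    · refine Or.inr ?_
      obtain ⟨x, rfl⟩ := Submodule.Quotient.mk_surjective S q
      have h' : c • x ∈ S := by
        rwa [← Submodule.Quotient.mk_eq_zero, Submodule.Quotient.mk_smul]
      rw [Submodule.Quotient.mk_eq_zero, memS]
      rw [memS] at h'
      exact hsatz c hc _ h'
  haveI : Module.Free ℤ (H' ⧸ S) := Module.free_of_finite_type_torsion_free'
  obtain ⟨s, hs⟩ := Module.projective_lifting_property S.mkQ (LinearMap.id) S.mkQ_surjective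
  have hmem : ∀ x : H', ((x - s (S.mkQ x) : H') : G) ∈ H := by
    intro x
    rw [← memS, ← Submodule.Quotient.mk_eq_zero]
    have : S.mkQ (x - s (S.mkQ x)) = 0 := by
      rw [map_sub]
      have := LinearMap.congr_fun hs (S.mkQ x)
      simp only [LinearMap.comp_apply, LinearMap.id_apply] at this
      rw [this, sub_self]
    simpa [Submodule.mkQ_apply] using this
  refine ⟨AddMonoidHom.mk' (fun x => f ⟨_, hmem x⟩) ?_, ?_⟩
  · intro a b
    rw [← map_add]
    congr 1
    apply Subtype.ext
    push_cast
    rw [map_add, map_add]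
    push_cast [AddSubmonoid.coe_add]
    abel
  · intro g hg hg'
    simp only [AddMonoidHom.mk'_apply]
    have h0 : S.mkQ ⟨g, hg'⟩ = 0 := by
      rw [Submodule.mkQ_apply, Submodule.Quotient.mk_eq_zero, memS]
      exact hg
    congr 1
    apply Subtype.ext
    show ((⟨g, hg'⟩ - s (S.mkQ ⟨g, hg'⟩) : H') : G) = g
    rw [h0, map_zero, sub_zero]

theorem quot_fg {G : Type*} [AddCommGroup G] (H : AddSubgroup G) (T : Finset G) :
    Module.Finite ℤ
      ((H ⊔ AddSubgroup.closure (T : Set G) : AddSubgroup G) ⧸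
        ((H.addSubgroupOf (H ⊔ AddSubgroup.closure (T : Set G))).toIntSubmodule)) := by
  set H' : AddSubgroup G := H ⊔ AddSubgroup.closure (T : Set G) with hH'
  set S : Submodule ℤ H' := (H.addSubgroupOf H').toIntSubmodule with hS
  rw [Module.Finite.iff_addGroup_fg]
  have hcl : AddSubgroup.closure (T : Set G) ≤ H' := le_sup_right
  let φ : AddSubgroup.closure (T : Set G) →+ (H' ⧸ S) :=
    { toFun := fun c => S.mkQ ⟨(c : G), hcl c.2⟩
      map_zero' := by
        rw [Submodule.mkQ_apply, Submodule.Quotient.mk_eq_zero]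
        exact H.zero_mem
      map_add' := by
        intro a b
        rw [← map_add]
        congr 1 }
  have hsurj : Function.Surjective φ := by
    intro q
    obtain ⟨x, rfl⟩ := Submodule.Quotient.mk_surjective S q
    have hx : (x : G) ∈ H ⊔ AddSubgroup.closure (T : Set G) := x.2
    rw [AddSubgroup.mem_sup] at hx
    obtain ⟨h, hh, c, hc, hhc⟩ := hx
    refine ⟨⟨c, hc⟩, ?_⟩
    have : S.mkQ ⟨c, hcl hc⟩ = S.mkQ x := by
      rw [Submodule.mkQ_apply, Submodule.mkQ_apply, Submodule.Quotient.eq]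
      show ((⟨c, hcl hc⟩ - x : H') : G) ∈ H
      have : ((⟨c, hcl hc⟩ - x : H') : G) = c - (x : G) := rfl
      rw [this, ← hhc]
      simpa using H.neg_mem hh
    exact this
  exact AddGroup.fg_of_surjective hsurj

/-- Compactness/purity extension: a hom from a saturated subgroup into a compact
Hausdorff topological abelian group extends to the whole group. -/
theorem extend_hom {G M : Type*} [AddCommGroup G] [AddCommGroup M]
    [TopologicalSpace M] [CompactSpace M] [T2Space M] [ContinuousAdd M]
    (H : AddSubgroup G)
    (hsat : ∀ (n : ℕ), 0 < n → ∀ g : G, n • g ∈ H → g ∈ H)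
    (f : H →+ M) :
    ∃ F : G →+ M, ∀ h : H, F h = f h := by
  classical
  let Z : (G × G) ⊕ H → Set (G → M) := fun i =>
    match i with
    | Sum.inl (x, y) => {φ | φ (x + y) = φ x + φ y}
    | Sum.inr h => {φ | φ (h : G) = f h}
  have hZc : ∀ i, IsClosed (Z i) := by
    rintro (⟨x, y⟩ | h)
    · show IsClosed {φ : G → M | φ (x + y) = φ x + φ y}
      have c1 : Continuous fun φ : G → M => φ (x + y) := continuous_apply (x + y)
      have c2 : Continuous fun φ : G → M => φ x := continuous_apply x
      have c3 : Continuous fun φ : G → M => φ y := continuous_apply y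
      exact isClosed_eq c1 (c2.add c3)
    · show IsClosed {φ : G → M | φ (h : G) = f h}
      exact isClosed_eq (continuous_apply _) continuous_const
  have hfin : ∀ u : Finset ((G × G) ⊕ H),
      ((Set.univ : Set (G → M)) ∩ ⋂ i ∈ u, Z i).Nonempty := by
    intro u
    let T : Finset G := u.biUnion fun i =>
      match i with
      | Sum.inl (x, y) => {x, y, x + y}
      | Sum.inr h => {(h : G)}
    set H' : AddSubgroup G := H ⊔ AddSubgroup.closure (T : Set G) with hH'
    obtain ⟨F, hF⟩ := extend_fg H H' le_sup_left (quot_fg H T) hsat f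
    have hTH' : ∀ g ∈ T, g ∈ H' := fun g hg =>
      (le_sup_right : AddSubgroup.closure (T : Set G) ≤ H') (AddSubgroup.subset_closure hg)
    refine ⟨fun g => if hg : g ∈ H' then F ⟨g, hg⟩ else 0, Set.mem_inter trivial ?_⟩
    simp only [Set.mem_iInter]
    rintro (⟨x, y⟩ | h) hi
    · have hx : x ∈ H' := hTH' x (Finset.mem_biUnion.2 ⟨_, hi, by simp⟩)
      have hy : y ∈ H' := hTH' y (Finset.mem_biUnion.2 ⟨_, hi, by simp⟩)
      have hxy : x + y ∈ H' := H'.add_mem hx hy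
      show (if hg : x + y ∈ H' then F ⟨x + y, hg⟩ else 0)
          = (if hg : x ∈ H' then F ⟨x, hg⟩ else 0) + (if hg : y ∈ H' then F ⟨y, hg⟩ else 0)
      rw [dif_pos hxy, dif_pos hx, dif_pos hy, ← map_add]
      congr 1
    · have hh' : (h : G) ∈ H' := (le_sup_left : H ≤ H') h.2
      show (if hg : (h : G) ∈ H' then F ⟨h, hg⟩ else 0) = f h
      rw [dif_pos hh']
      exact hF h h.2 hh'
  obtain ⟨φ, -, hφ⟩ := (isCompact_univ (X := G → M)).inter_iInter_nonempty Z hZc hfin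
  simp only [Set.mem_iInter] at hφ
  have hadd : ∀ x y : G, φ (x + y) = φ x + φ y := fun x y => hφ (Sum.inl (x, y))
  refine ⟨AddMonoidHom.mk' φ hadd, fun h => hφ (Sum.inr h)⟩

theorem extend_hom_lam (ℓ : ℕ) [Fact ℓ.Prime] (m : ℕ∞) {G : Type*} [AddCommGroup G]
    (H : AddSubgroup G)
    (hsat : ∀ (n : ℕ), 0 < n → ∀ g : G, n • g ∈ H → g ∈ H)
    (f : H →+ Lam ℓ m) :
    ∃ F : G →+ Lam ℓ m, ∀ h : H, F h = f h := by
  cases m with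
  | top => exact extend_hom (M := PadicInt ℓ) H hsat f
  | coe m =>
    haveI : NeZero (ℓ ^ m) := ⟨pow_ne_zero m (Fact.out (p := ℓ.Prime)).ne_zero⟩
    letI : TopologicalSpace (ZMod (ℓ ^ m)) := ⊥
    haveI : DiscreteTopology (ZMod (ℓ ^ m)) := ⟨rfl⟩
    haveI : ContinuousAdd (ZMod (ℓ ^ m)) := ⟨continuous_of_discreteTopology⟩
    exact extend_hom (M := ZMod (ℓ ^ m)) H hsat f

end AuxExtension

section AuxValuation

variable {K : Type*} [Field K]

theorem val_one_iff' (V : ValuationSubring K) (x : K) (hx : x ≠ 0) :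
    V.valuation x = 1 ↔ x ∈ V ∧ x⁻¹ ∈ V := by
  have hv0 : V.valuation x ≠ 0 := by
    simpa using hx
  constructor
  · intro h
    refine ⟨(V.valuation_le_one_iff x).mp h.le, (V.valuation_le_one_iff _).mp ?_⟩
    rw [map_inv₀, h, inv_one]
  · rintro ⟨h1, h2⟩
    rw [← V.valuation_le_one_iff] at h1 h2
    rw [map_inv₀] at h2
    exact le_antisymm h1 ((inv_le_one₀ (zero_lt_iff.mpr hv0)).mp h2)

theorem val_lt_one_iff' (V : ValuationSubring K) (x : K) (hx : x ≠ 0) :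
    V.valuation x < 1 ↔ x ∈ V ∧ x⁻¹ ∉ V := by
  have hv0 : V.valuation x ≠ 0 := by simpa using hx
  rw [lt_iff_le_and_ne, V.valuation_le_one_iff]
  constructor
  · rintro ⟨h1, h2⟩
    refine ⟨h1, fun hmem => h2 ?_⟩
    rw [← V.valuation_le_one_iff, map_inv₀] at hmem
    exact le_antisymm ((V.valuation_le_one_iff x).mpr h1)
      ((inv_le_one₀ (zero_lt_iff.mpr hv0)).mp hmem)
  · rintro ⟨h1, h2⟩
    refine ⟨h1, fun he => h2 ?_⟩
    rw [← V.valuation_le_one_iff, map_inv₀, he, inv_one]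

section Res

variable (A : ValuationSubring K)

theorem res_mul_inv (x : K) (hx0 : x ≠ 0) (hx : x ∈ A) (hxi : x⁻¹ ∈ A) :
    IsLocalRing.residue A ⟨x, hx⟩ * IsLocalRing.residue A ⟨x⁻¹, hxi⟩ = 1 := by
  rw [← map_mul, ← map_one (IsLocalRing.residue A)]
  congr 1
  exact Subtype.ext (mul_inv_cancel₀ hx0)

theorem res_ne_zero (x : K) (hx0 : x ≠ 0) (hx : x ∈ A) (hxi : x⁻¹ ∈ A) :
    IsLocalRing.residue A ⟨x, hx⟩ ≠ 0 :=
  left_ne_zero_of_mul_eq_one (res_mul_inv A x hx0 hx hxi)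

theorem res_inv (x : K) (hx0 : x ≠ 0) (hx : x ∈ A) (hxi : x⁻¹ ∈ A) :
    IsLocalRing.residue A ⟨x⁻¹, hxi⟩ = (IsLocalRing.residue A ⟨x, hx⟩)⁻¹ :=
  eq_inv_of_mul_eq_one_right (res_mul_inv A x hx0 hx hxi)

theorem res_eq_zero_iff (x : K) (hx : x ∈ A) :
    IsLocalRing.residue A ⟨x, hx⟩ = 0 ↔ ¬IsUnit (⟨x, hx⟩ : A) := by
  exact (Ideal.Quotient.eq_zero_iff_mem).trans
    (by rw [IsLocalRing.mem_maximalIdeal, mem_nonunits_iff])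

theorem isUnit_iff_inv_mem (x : K) (hx0 : x ≠ 0) (hx : x ∈ A) :
    IsUnit (⟨x, hx⟩ : A) ↔ x⁻¹ ∈ A := by
  constructor
  · rintro ⟨u, hu⟩
    have h1 : (u : A) * (u⁻¹ : Aˣ) = 1 := u.mul_inv
    have h2 : x * ((u⁻¹ : Aˣ) : K) = 1 := by
      have := congrArg (Subtype.val) h1
      simpa [hu] using this
    have : x⁻¹ = ((u⁻¹ : Aˣ) : K) := inv_eq_of_mul_eq_one_right h2
    rw [this]; exact ((u⁻¹ : Aˣ) : A).2
  · intro hxi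
    exact IsUnit.of_mul_eq_one ⟨x⁻¹, hxi⟩ (Subtype.ext (mul_inv_cancel₀ hx0))

end Res

section Key

variable (A : ValuationSubring K) (B : ValuationSubring (IsLocalRing.ResidueField A))
  (W : ValuationSubring K)
  (hW : ∀ y : K, y ∈ W ↔ ∃ h : y ∈ A, IsLocalRing.residue A ⟨y, h⟩ ∈ B)

include hW

theorem memW_iff (y : K) (hy : y ∈ A) :
    y ∈ W ↔ IsLocalRing.residue A ⟨y, hy⟩ ∈ B := by
  rw [hW y]
  exact ⟨fun ⟨h, hh⟩ => hh, fun h => ⟨hy, h⟩⟩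

theorem W_le_A : ∀ y : K, y ∈ W → y ∈ A := fun y hy => ((hW y).mp hy).1

theorem key_unit (x : K) (hx0 : x ≠ 0) (hx : x ∈ A) (hxi : x⁻¹ ∈ A) :
    W.valuation x = 1 ↔ B.valuation (IsLocalRing.residue A ⟨x, hx⟩) = 1 := by
  rw [val_one_iff' W x hx0, val_one_iff' B _ (res_ne_zero A x hx0 hx hxi),
    memW_iff A B W hW x hx, memW_iff A B W hW x⁻¹ hxi, res_inv A x hx0 hx hxi]

theorem key_punit (x : K) (hx0 : x ≠ 0) (hx : x ∈ A) :
    W.valuation (x - 1) < 1 ↔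
      B.valuation (IsLocalRing.residue A ⟨x, hx⟩ - 1) < 1 := by
  have hx1 : x - 1 ∈ A := A.sub_mem hx A.one_mem
  have hres : IsLocalRing.residue A ⟨x, hx⟩ - 1 = IsLocalRing.residue A ⟨x - 1, hx1⟩ := by
    have h : (⟨x - 1, hx1⟩ : A) = ⟨x, hx⟩ - 1 := rfl
    rw [h, map_sub, map_one]
  by_cases h0 : IsLocalRing.residue A ⟨x - 1, hx1⟩ = 0
  · have hR : B.valuation (IsLocalRing.residue A ⟨x, hx⟩ - 1) < 1 := by
      rw [hres, h0, map_zero]; exact zero_lt_one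
    refine ⟨fun _ => hR, fun _ => ?_⟩
    by_cases hx10 : x - 1 = 0
    · rw [hx10, map_zero]; exact zero_lt_one
    · rw [val_lt_one_iff' W _ hx10]
      have hnu : ¬IsUnit (⟨x - 1, hx1⟩ : A) := (res_eq_zero_iff A _ hx1).mp h0
      have hinv : (x - 1)⁻¹ ∉ A := fun hmem =>
        hnu ((isUnit_iff_inv_mem A _ hx10 hx1).mpr hmem)
      refine ⟨(memW_iff A B W hW _ hx1).mpr (by rw [h0]; exact B.zero_mem), fun hmem => ?_⟩
      exact hinv (W_le_A A B W hW _ hmem)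
  · have hx10 : x - 1 ≠ 0 := by
      intro h
      apply h0
      have : (⟨x - 1, hx1⟩ : A) = 0 := Subtype.ext h
      rw [this, map_zero]
    have hu : IsUnit (⟨x - 1, hx1⟩ : A) := by
      by_contra hnu
      exact h0 ((res_eq_zero_iff A _ hx1).mpr hnu)
    have hx1i : (x - 1)⁻¹ ∈ A := (isUnit_iff_inv_mem A _ hx10 hx1).mp hu
    have hres0 : IsLocalRing.residue A ⟨x - 1, hx1⟩ ≠ 0 := h0
    rw [val_lt_one_iff' W _ hx10, hres, val_lt_one_iff' B _ hres0,
      memW_iff A B W hW _ hx1, memW_iff A B W hW _ hx1i, res_inv A _ hx10 hx1 hx1i]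

omit hW in
theorem res_lift (u : IsLocalRing.ResidueField A) (hu : u ≠ 0) :
    ∃ (x : K) (hx : x ∈ A), x ≠ 0 ∧ x⁻¹ ∈ A ∧ IsLocalRing.residue A ⟨x, hx⟩ = u := by
  obtain ⟨y, hy⟩ := IsLocalRing.residue_surjective (R := A) u
  have hyu : IsUnit y := by
    by_contra hnu
    exact hu (hy ▸ (res_eq_zero_iff A _ y.2).mpr (by simpa using hnu))
  have hy0 : (y : K) ≠ 0 := by
    rintro h
    apply hu
    rw [← hy]
    have : y = 0 := Subtype.ext h
    rw [this, map_zero]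
  have hyi : (y : K)⁻¹ ∈ A := (isUnit_iff_inv_mem A _ hy0 y.2).mp (by simpa using hyu)
  exact ⟨y, y.2, hy0, hyi, by simpa using hy⟩

end Key

end AuxValuation

section AuxGal

variable {ℓ : ℕ} [Fact ℓ.Prime] {m : ℕ∞} {K : Type*} [Field K]

theorem galu_mul (σ : gal ℓ m K) (x y : Kˣ) :
    galu σ (x * y) = galu σ x + galu σ y := by
  unfold galu
  rw [← map_add]
  rfl

theorem galApp_mk0 (σ : gal ℓ m K) (a : K) (ha : a ≠ 0) :
    galApp σ a = galu σ (Units.mk0 a ha) := by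
  unfold galApp
  rw [dif_pos ha]

theorem galApp_unit (σ : gal ℓ m K) (x : Kˣ) :
    galApp σ (x : K) = galu σ x := by
  rw [galApp_mk0 σ _ (Units.ne_zero x)]
  congr 1
  exact Units.ext rfl

theorem galApp_mul (σ : gal ℓ m K) (a b : K) (ha : a ≠ 0) (hb : b ≠ 0) :
    galApp σ (a * b) = galApp σ a + galApp σ b := by
  rw [galApp_mk0 σ a ha, galApp_mk0 σ b hb, galApp_mk0 σ (a * b) (mul_ne_zero ha hb),
    ← galu_mul]
  congr 1
  exact Units.ext rfl

/-- The additive subgroup of `Additive Kˣ` consisting of `v`-units. -/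
def unitsAdd (A : ValuationSubring K) : AddSubgroup (Additive Kˣ) where
  carrier := {x | A.valuation ((Additive.toMul x : Kˣ) : K) = 1}
  zero_mem' := by
    show A.valuation ((1 : Kˣ) : K) = 1
    rw [Units.val_one, map_one]
  add_mem' := by
    intro a b ha hb
    show A.valuation (((Additive.toMul a * Additive.toMul b : Kˣ)) : K) = 1
    rw [Units.val_mul, map_mul, ha, hb, mul_one]
  neg_mem' := by
    intro a ha
    show A.valuation (((Additive.toMul a)⁻¹ : Kˣ) : K) = 1
    rw [Units.val_inv_eq_inv_val, map_inv₀, ha, inv_one]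

theorem unitsAdd_sat (A : ValuationSubring K) :
    ∀ (n : ℕ), 0 < n → ∀ g : Additive Kˣ, n • g ∈ unitsAdd A → g ∈ unitsAdd A := by
  intro n hn g hg
  have h : A.valuation (((Additive.toMul g : Kˣ) : K) ^ n) = 1 := by
    have : ((Additive.toMul (n • g) : Kˣ) : K) = ((Additive.toMul g : Kˣ) : K) ^ n := by
      rw [toMul_nsmul]
      rw [Units.val_pow_eq_pow_val]
    rw [← this]
    exact hg
  rw [map_pow] at h
  exact pow_eq_one_iff_left hn.ne' |>.mp h

/-- Every element of `𝔤^m(Kv)` is induced by some element of `𝔤^m(K)`. -/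
theorem exists_inducing (A : ValuationSubring K) (τ : gal ℓ m (resField A)) :
    ∃ σ : gal ℓ m K, Induces A σ τ := by
  classical
  have hmemA : ∀ x : Additive Kˣ, x ∈ unitsAdd A →
      ((Additive.toMul x : Kˣ) : K) ∈ A := fun x hx =>
    (A.valuation_le_one_iff _).mp (le_of_eq hx)
  let f : unitsAdd A →+ Lam ℓ m := AddMonoidHom.mk'
    (fun x => galApp τ (IsLocalRing.residue A
      ⟨((Additive.toMul (x : Additive Kˣ) : Kˣ) : K), hmemA _ x.2⟩)) (by
    intro a b
    have hres : ∀ (x : Additive Kˣ) (hx : x ∈ unitsAdd A),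
        IsLocalRing.residue A ⟨((Additive.toMul x : Kˣ) : K), hmemA _ hx⟩ ≠ 0 := by
      intro x hx
      have h1 : ((Additive.toMul x : Kˣ) : K) ≠ 0 := Units.ne_zero _
      have h2 : (((Additive.toMul x : Kˣ) : K))⁻¹ ∈ A :=
        ((val_one_iff' A _ h1).mp hx).2
      exact res_ne_zero A _ h1 (hmemA _ hx) h2
    have hmul : (⟨((Additive.toMul ((a + b : unitsAdd A) : Additive Kˣ) : Kˣ) : K),
          hmemA _ (a + b).2⟩ : A)
        = ⟨((Additive.toMul (a : Additive Kˣ) : Kˣ) : K), hmemA _ a.2⟩ *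
          ⟨((Additive.toMul (b : Additive Kˣ) : Kˣ) : K), hmemA _ b.2⟩ := by
      apply Subtype.ext
      rfl
    rw [hmul, map_mul]
    exact galApp_mul τ _ _ (hres _ a.2) (hres _ b.2))
  obtain ⟨F, hF⟩ := extend_hom_lam ℓ m (unitsAdd A) (unitsAdd_sat A) f
  refine ⟨F, ?_⟩
  intro x h
  have hx : Additive.ofMul x ∈ unitsAdd A := h
  have := hF ⟨Additive.ofMul x, hx⟩
  exact this.symm

end AuxGal

/-- Behaviour of minimized inertia/decomposition under composition of valuations:
for `W = w∘v` one has `D_w^m = D_{w∘v}^m/I_v^m` and `I_w^m = I_{w∘v}^m/I_v^m`. -/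
theorem stmt7 (ℓ : ℕ) [Fact ℓ.Prime] (m : ℕ∞) (hm : 1 ≤ m) (K : Type*) [Field K]
    (A : ValuationSubring K) (B : ValuationSubring (resField A))
    (W : ValuationSubring K)
    (hW : ∀ y : K, y ∈ W ↔ ∃ h : y ∈ A, IsLocalRing.residue A ⟨y, h⟩ ∈ B) :
    inertia ℓ m A ⊆ inertia ℓ m W ∧
    inertia ℓ m A ⊆ decomp ℓ m W ∧
    decomp ℓ m W ⊆ decomp ℓ m A ∧
    (∀ σ ∈ decomp ℓ m W, ∀ τ : gal ℓ m (resField A), Induces A σ τ →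
      τ ∈ decomp ℓ m B) ∧
    (∀ τ ∈ decomp ℓ m B, ∃ σ ∈ decomp ℓ m W, Induces A σ τ) ∧
    (∀ σ ∈ inertia ℓ m W, ∀ τ : gal ℓ m (resField A), Induces A σ τ →
      τ ∈ inertia ℓ m B) ∧
    (∀ τ ∈ inertia ℓ m B, ∃ σ ∈ inertia ℓ m W, Induces A σ τ) ∧
    (∀ σ ∈ decomp ℓ m A, ∀ τ : gal ℓ m (resField A), Induces A σ τ →
      τ ∈ decomp ℓ m B → σ ∈ decomp ℓ m W) ∧
    (∀ σ ∈ decomp ℓ m A, ∀ τ : gal ℓ m (resField A), Induces A σ τ →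
      τ ∈ inertia ℓ m B → σ ∈ inertia ℓ m W) := by
  classical
  have hWA : ∀ y : K, y ∈ W → y ∈ A := W_le_A A B W hW
  -- basic unit facts
  have hmemA : ∀ (x : Kˣ), A.valuation (x : K) = 1 → ((x : K) ∈ A ∧ ((x : K))⁻¹ ∈ A) :=
    fun x hx => (val_one_iff' A _ (Units.ne_zero x)).mp hx
  have hWu : ∀ x : Kˣ, W.valuation (x : K) = 1 → A.valuation (x : K) = 1 := by
    intro x h
    rw [val_one_iff' W _ (Units.ne_zero x)] at h
    rw [val_one_iff' A _ (Units.ne_zero x)]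
    exact ⟨hWA _ h.1, hWA _ h.2⟩
  have hW1 : ∀ x : Kˣ, W.valuation ((x : K) - 1) < 1 → W.valuation (x : K) = 1 := by
    intro x h
    have h2 : W.valuation (((x : K) - 1) + 1) = W.valuation 1 :=
      Valuation.map_add_eq_of_lt_right _ (by simpa using h)
    simpa using h2
  -- residue of a unit, as a unit
  have hresne : ∀ (x : Kˣ) (hx : A.valuation (x : K) = 1),
      IsLocalRing.residue A ⟨(x : K), (hmemA x hx).1⟩ ≠ 0 := fun x hx =>
    res_ne_zero A _ (Units.ne_zero x) (hmemA x hx).1 (hmemA x hx).2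
  -- (a) key equivalence for units
  have keyu : ∀ (x : Kˣ) (hx : A.valuation (x : K) = 1),
      (W.valuation (x : K) = 1 ↔
        B.valuation (IsLocalRing.residue A ⟨(x : K), (hmemA x hx).1⟩) = 1) := fun x hx =>
    key_unit A B W hW _ (Units.ne_zero x) (hmemA x hx).1 (hmemA x hx).2
  -- (b) key equivalence for principal units
  have keyp : ∀ (x : Kˣ) (hx : A.valuation (x : K) = 1),
      (W.valuation ((x : K) - 1) < 1 ↔
        B.valuation (IsLocalRing.residue A ⟨(x : K), (hmemA x hx).1⟩ - 1) < 1) := fun x hx =>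
    key_punit A B W hW _ (Units.ne_zero x) (hmemA x hx).1
  -- statement 1
  have s1 : inertia ℓ m A ⊆ inertia ℓ m W := by
    intro σ hσ x hx
    exact hσ x (hWu x hx)
  -- statement 2
  have s2 : inertia ℓ m A ⊆ decomp ℓ m W := by
    intro σ hσ x hx
    exact hσ x (hWu x (hW1 x hx))
  -- statement 3
  have s3 : decomp ℓ m W ⊆ decomp ℓ m A := by
    intro σ hσ x hx
    apply hσ x
    by_cases h0 : (x : K) - 1 = 0
    · rw [h0, map_zero]; exact zero_lt_one
    · rw [val_lt_one_iff' A _ h0] at hx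
      obtain ⟨h1, h2⟩ := hx
      rw [val_lt_one_iff' W _ h0]
      have hnu : ¬IsUnit (⟨(x : K) - 1, h1⟩ : A) := fun hu =>
        h2 ((isUnit_iff_inv_mem A _ h0 h1).mp hu)
      have hres0 : IsLocalRing.residue A ⟨(x : K) - 1, h1⟩ = 0 :=
        (res_eq_zero_iff A _ h1).mpr hnu
      refine ⟨(memW_iff A B W hW _ h1).mpr (by rw [hres0]; exact B.zero_mem), fun hm => ?_⟩
      exact h2 (hWA _ hm)
  -- statement 4
  have s4 : ∀ σ ∈ decomp ℓ m W, ∀ τ : gal ℓ m (resField A), Induces A σ τ →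
      τ ∈ decomp ℓ m B := by
    intro σ hσ τ hInd u hu
    obtain ⟨y, hy, hy0, hyi, hyres⟩ := res_lift A (u : resField A) (Units.ne_zero u)
    set xu : Kˣ := Units.mk0 y hy0 with hxu
    have hxA : A.valuation ((xu : Kˣ) : K) = 1 := (val_one_iff' A _ hy0).mpr ⟨hy, hyi⟩
    have hresx : IsLocalRing.residue A ⟨((xu : Kˣ) : K), (hmemA xu hxA).1⟩
        = (u : resField A) := hyres
    have hWlt : W.valuation (((xu : Kˣ) : K) - 1) < 1 := by
      rw [keyp xu hxA, hresx]
      exact hu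
    have h0 : galu σ xu = 0 := hσ xu hWlt
    have h1 := hInd xu hxA
    have h2 : galApp τ (u : resField A) = 0 := by
      have hre : IsLocalRing.residue A
          ⟨((xu : Kˣ) : K), (A.valuation_le_one_iff ((xu : Kˣ) : K)).mp hxA.le⟩
          = (u : resField A) := hyres
      rw [hre] at h1
      rw [h1, h0]
    rwa [galApp_unit] at h2
  -- statement 6
  have s6 : ∀ σ ∈ inertia ℓ m W, ∀ τ : gal ℓ m (resField A), Induces A σ τ →
      τ ∈ inertia ℓ m B := by
    intro σ hσ τ hInd u hu
    obtain ⟨y, hy, hy0, hyi, hyres⟩ := res_lift A (u : resField A) (Units.ne_zero u)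
    set xu : Kˣ := Units.mk0 y hy0 with hxu
    have hxA : A.valuation ((xu : Kˣ) : K) = 1 := (val_one_iff' A _ hy0).mpr ⟨hy, hyi⟩
    have hresx : IsLocalRing.residue A ⟨((xu : Kˣ) : K), (hmemA xu hxA).1⟩
        = (u : resField A) := hyres
    have hWv : W.valuation ((xu : Kˣ) : K) = 1 := by
      rw [keyu xu hxA, hresx]
      exact hu
    have h0 : galu σ xu = 0 := hσ xu hWv
    have h1 := hInd xu hxA
    have h2 : galApp τ (u : resField A) = 0 := by
      have hre : IsLocalRing.residue A
          ⟨((xu : Kˣ) : K), (A.valuation_le_one_iff ((xu : Kˣ) : K)).mp hxA.le⟩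
          = (u : resField A) := hyres
      rw [hre] at h1
      rw [h1, h0]
    rwa [galApp_unit] at h2
  -- statement 8 (decomp direction)
  have s8 : ∀ σ ∈ decomp ℓ m A, ∀ τ : gal ℓ m (resField A), Induces A σ τ →
      τ ∈ decomp ℓ m B → σ ∈ decomp ℓ m W := by
    intro σ _ τ hInd hτ x hx
    have hWv : W.valuation (x : K) = 1 := hW1 x hx
    have hxA : A.valuation (x : K) = 1 := hWu x hWv
    have hBlt : B.valuation (IsLocalRing.residue A ⟨(x : K), (hmemA x hxA).1⟩ - 1) < 1 :=
      (keyp x hxA).mp hx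
    set u : (resField A)ˣ := Units.mk0 _ (hresne x hxA) with hu
    have h0 : galu τ u = 0 := hτ u hBlt
    have h1 := hInd x hxA
    rw [← h1]
    have : galApp τ (IsLocalRing.residue A
        ⟨(x : K), (A.valuation_le_one_iff (x : K)).mp hxA.le⟩) = galu τ u := by
      rw [show IsLocalRing.residue A
          ⟨(x : K), (A.valuation_le_one_iff (x : K)).mp hxA.le⟩ = (u : resField A) from rfl,
        galApp_unit]
    rw [this, h0]
  -- statement 9 (inertia direction)
  have s9 : ∀ σ ∈ decomp ℓ m A, ∀ τ : gal ℓ m (resField A), Induces A σ τ →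
      τ ∈ inertia ℓ m B → σ ∈ inertia ℓ m W := by
    intro σ _ τ hInd hτ x hx
    have hxA : A.valuation (x : K) = 1 := hWu x hx
    have hBv : B.valuation (IsLocalRing.residue A ⟨(x : K), (hmemA x hxA).1⟩) = 1 :=
      (keyu x hxA).mp hx
    set u : (resField A)ˣ := Units.mk0 _ (hresne x hxA) with hu
    have h0 : galu τ u = 0 := hτ u hBv
    have h1 := hInd x hxA
    rw [← h1]
    have : galApp τ (IsLocalRing.residue A
        ⟨(x : K), (A.valuation_le_one_iff (x : K)).mp hxA.le⟩) = galu τ u := by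
      rw [show IsLocalRing.residue A
          ⟨(x : K), (A.valuation_le_one_iff (x : K)).mp hxA.le⟩ = (u : resField A) from rfl,
        galApp_unit]
    rw [this, h0]
  -- statement 5: surjectivity onto decomp B
  have s5 : ∀ τ ∈ decomp ℓ m B, ∃ σ ∈ decomp ℓ m W, Induces A σ τ := by
    intro τ hτ
    obtain ⟨σ, hInd⟩ := exists_inducing A τ
    refine ⟨σ, ?_, hInd⟩
    intro x hx
    have hWv : W.valuation (x : K) = 1 := hW1 x hx
    have hxA : A.valuation (x : K) = 1 := hWu x hWv
    have hBlt : B.valuation (IsLocalRing.residue A ⟨(x : K), (hmemA x hxA).1⟩ - 1) < 1 :=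
      (keyp x hxA).mp hx
    set u : (resField A)ˣ := Units.mk0 _ (hresne x hxA) with hu
    have h0 : galu τ u = 0 := hτ u hBlt
    have h1 := hInd x hxA
    rw [← h1]
    have : galApp τ (IsLocalRing.residue A
        ⟨(x : K), (A.valuation_le_one_iff (x : K)).mp hxA.le⟩) = galu τ u := by
      rw [show IsLocalRing.residue A
          ⟨(x : K), (A.valuation_le_one_iff (x : K)).mp hxA.le⟩ = (u : resField A) from rfl,
        galApp_unit]
    rw [this, h0]
  -- statement 7: surjectivity onto inertia B
  have s7 : ∀ τ ∈ inertia ℓ m B, ∃ σ ∈ inertia ℓ m W, Induces A σ τ := by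
    intro τ hτ
    obtain ⟨σ, hInd⟩ := exists_inducing A τ
    refine ⟨σ, ?_, hInd⟩
    intro x hx
    have hxA : A.valuation (x : K) = 1 := hWu x hx
    have hBv : B.valuation (IsLocalRing.residue A ⟨(x : K), (hmemA x hxA).1⟩) = 1 :=
      (keyu x hxA).mp hx
    set u : (resField A)ˣ := Units.mk0 _ (hresne x hxA) with hu
    have h0 : galu τ u = 0 := hτ u hBv
    have h1 := hInd x hxA
    rw [← h1]
    have : galApp τ (IsLocalRing.residue A
        ⟨(x : K), (A.valuation_le_one_iff (x : K)).mp hxA.le⟩) = galu τ u := by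
      rw [show IsLocalRing.residue A
          ⟨(x : K), (A.valuation_le_one_iff (x : K)).mp hxA.le⟩ = (u : resField A) from rfl,
        galApp_unit]
    rw [this, h0]
  exact ⟨s1, s2, s3, s4, s5, s6, s7, s8, s9⟩
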